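/- Let n ≥ 2 be a natural number. Let f, g, h, fₜ, gₜ, hₜ : ℝ → ℝ be functions with f, g, h differentiable, and suppose h(x) > 0 and f(x)·h(x) − g(x)² > 0 for all x ∈ ℝ. Let Aₖ, Cₖ, Dₖ : ℝ → ℝ (0 ≤ k ≤ n) be differentiable functions. Suppose that for every z ∈ ℝ and every x ∈ ℝ the three equations hold: z·hₜ(x) − Σₖ Cₖ′(x)·zᵏ = 2z·h(x)·Σₖ Aₖ(x)·zᵏ − 2z·g(x)·Σₖ Cₖ(x)·zᵏ; −z·fₜ(x) + Σₖ Dₖ′(x)·zᵏ = 2z·f(x)·Σₖ Aₖ(x)·zᵏ − 2z·g(x)·Σₖ Dₖ(x)·zᵏ; and z·gₜ(x) − Σₖ Aₖ′(x)·zᵏ = −z·f(x)·Σₖ Cₖ(x)·zᵏ + z·h(x)·Σₖ Dₖ(x)·zᵏ (sums over 0 ≤ k ≤ n). Then the function x ↦ (Cₙ(x)/h(x))²·(f(x)·h(x) − g(x)²) is constant on ℝ. -/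

import Mathlib

open Polynomial Finset in
lemma sum_eval (m : ℕ) (c : ℕ → ℝ) (z : ℝ) :
    (∑ k ∈ range m, Polynomial.C (c k) * X ^ k).eval z = ∑ k ∈ range m, c k * z ^ k := by
  simp [Polynomial.eval_finset_sum]

open Polynomial Finset in
lemma sum_coeff (m : ℕ) (c : ℕ → ℝ) (j : ℕ) (hj : j < m) :
    (∑ k ∈ range m, Polynomial.C (c k) * X ^ k).coeff j = c j := by
  rw [finset_sum_coeff]
  simp only [coeff_C_mul, coeff_X_pow]
  rw [Finset.sum_eq_single j]
  · simp
  · intro b _ hb; simp [Ne.symm hb]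
  · intro hb; exact absurd (mem_range.mpr hj) hb

open Polynomial Finset in
lemma sum_coeff_ge (m : ℕ) (c : ℕ → ℝ) (j : ℕ) (hj : m ≤ j) :
    (∑ k ∈ range m, Polynomial.C (c k) * X ^ k).coeff j = 0 := by
  rw [finset_sum_coeff]
  apply Finset.sum_eq_zero
  intro b hb
  have hne : j ≠ b := by have := mem_range.mp hb; omega
  simp [coeff_C_mul, coeff_X_pow, hne]

open Polynomial Finset in
lemma extract (n : ℕ) (hn : 2 ≤ n) (u s a b : ℝ) (p q r : ℕ → ℝ)
    (H : ∀ z : ℝ, z * u + s * ∑ k ∈ range (n + 1), p k * z ^ k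
      = z * a * ∑ k ∈ range (n + 1), q k * z ^ k
        + z * b * ∑ k ∈ range (n + 1), r k * z ^ k) :
    a * q n + b * r n = 0 ∧ s * p n = a * q (n - 1) + b * r (n - 1) := by
  set P : ℝ[X] := ∑ k ∈ range (n + 1), Polynomial.C (p k) * X ^ k with hP
  set Q : ℝ[X] := ∑ k ∈ range (n + 1), Polynomial.C (q k) * X ^ k with hQ
  set R : ℝ[X] := ∑ k ∈ range (n + 1), Polynomial.C (r k) * X ^ k with hR
  have hpoly : Polynomial.C u * X + Polynomial.C s * P
      = Polynomial.C a * (X * Q) + Polynomial.C b * (X * R) := by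
    apply Polynomial.funext
    intro z
    simp only [eval_add, eval_mul, eval_C, eval_X, hP, hQ, hR, sum_eval]
    linear_combination H z
  have hn1 : (1 : ℕ) ≠ n + 1 := by omega
  constructor
  · have := congrArg (fun P => Polynomial.coeff P (n + 1)) hpoly
    simp only [coeff_add, coeff_C_mul, coeff_X, coeff_X_mul, hn1, if_neg] at this
    rw [sum_coeff_ge (n+1) p (n+1) le_rfl, sum_coeff n.succ q n (by omega),
      sum_coeff n.succ r n (by omega)] at this
    simp at this
    linarith
  · obtain ⟨m, rfl⟩ : ∃ m, n = m + 2 := ⟨n - 2, by omega⟩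
    have := congrArg (fun P => Polynomial.coeff P (m + 2)) hpoly
    simp only [coeff_add, coeff_C_mul, coeff_X, coeff_X_mul] at this
    rw [sum_coeff (m + 2 + 1) p (m + 2) (by omega),
      sum_coeff (m + 2 + 1) q (m + 1) (by omega),
      sum_coeff (m + 2 + 1) r (m + 1) (by omega),
      if_neg (by omega : ¬ (1 = m + 2))] at this
    have hmm : m + 2 - 1 = m + 1 := by omega
    rw [hmm]
    linarith


open Finset in
/-- Theorem 4.1 (concrete form): for a positive-definite Hamiltonian with entries
`f, g, h` and polynomial (degree `n ≥ 2` in `z`) entries `Ã, C̃, D̃` of the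
generator `B̃` satisfying the three zero-curvature equations (3.14) for all `z`,
the function `x ↦ (Cₙ/h)²·(f·h − g²)` is constant. -/
theorem stmt16 (n : ℕ) (hn : 2 ≤ n) (f g h fₜ gₜ hₜ : ℝ → ℝ)
    (hf : Differentiable ℝ f) (hg : Differentiable ℝ g) (hh : Differentiable ℝ h)
    (hhpos : ∀ x : ℝ, 0 < h x) (hΔpos : ∀ x : ℝ, 0 < f x * h x - g x ^ 2)
    (A C D : ℕ → ℝ → ℝ)
    (hA : ∀ k : ℕ, Differentiable ℝ (A k))
    (hC : ∀ k : ℕ, Differentiable ℝ (C k))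
    (hD : ∀ k : ℕ, Differentiable ℝ (D k))
    (h1 : ∀ z x : ℝ, z * hₜ x - ∑ k ∈ range (n + 1), deriv (C k) x * z ^ k
      = 2 * z * h x * ∑ k ∈ range (n + 1), A k x * z ^ k
        - 2 * z * g x * ∑ k ∈ range (n + 1), C k x * z ^ k)
    (h2 : ∀ z x : ℝ, -(z * fₜ x) + ∑ k ∈ range (n + 1), deriv (D k) x * z ^ k
      = 2 * z * f x * ∑ k ∈ range (n + 1), A k x * z ^ k
        - 2 * z * g x * ∑ k ∈ range (n + 1), D k x * z ^ k)
    (h3 : ∀ z x : ℝ, z * gₜ x - ∑ k ∈ range (n + 1), deriv (A k) x * z ^ k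
      = -(z * f x * ∑ k ∈ range (n + 1), C k x * z ^ k)
        + z * h x * ∑ k ∈ range (n + 1), D k x * z ^ k) :
    ∀ x y : ℝ, (C n x / h x) ^ 2 * (f x * h x - g x ^ 2)
      = (C n y / h y) ^ 2 * (f y * h y - g y ^ 2) := by
  -- extraction of top and subtop coefficients
  have E1 := fun x : ℝ => extract n hn (hₜ x) (-1) (2 * h x) (-(2 * g x))
    (fun k => deriv (C k) x) (fun k => A k x) (fun k => C k x)
    (fun z => by linear_combination h1 z x)
  have E2 := fun x : ℝ => extract n hn (-(fₜ x)) 1 (2 * f x) (-(2 * g x))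
    (fun k => deriv (D k) x) (fun k => A k x) (fun k => D k x)
    (fun z => by linear_combination h2 z x)
  have E3 := fun x : ℝ => extract n hn (gₜ x) (-1) (-(f x)) (h x)
    (fun k => deriv (A k) x) (fun k => C k x) (fun k => D k x)
    (fun z => by linear_combination h3 z x)
  have top1 : ∀ y, h y * A n y = g y * C n y := fun y => by
    have := (E1 y).1; linarith
  have top2 : ∀ y, h y * D n y = f y * C n y := fun y => by
    have := (E3 y).1; linarith
  have e1' : ∀ y, deriv h y * A n y + h y * deriv (A n) y
      = deriv g y * C n y + g y * deriv (C n) y := by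
    intro y
    have H1 : HasDerivAt (fun y => h y * A n y)
        (deriv h y * A n y + h y * deriv (A n) y) y :=
      ((hh y).hasDerivAt).mul ((hA n y).hasDerivAt)
    have H2 : HasDerivAt (fun y => g y * C n y)
        (deriv g y * C n y + g y * deriv (C n) y) y :=
      ((hg y).hasDerivAt).mul ((hC n y).hasDerivAt)
    rw [show (fun y => h y * A n y) = fun y => g y * C n y from funext top1] at H1
    exact H1.unique H2
  have e2' : ∀ y, deriv h y * D n y + h y * deriv (D n) y
      = deriv f y * C n y + f y * deriv (C n) y := by
    intro y
    have H1 : HasDerivAt (fun y => h y * D n y)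
        (deriv h y * D n y + h y * deriv (D n) y) y :=
      ((hh y).hasDerivAt).mul ((hD n y).hasDerivAt)
    have H2 : HasDerivAt (fun y => f y * C n y)
        (deriv f y * C n y + f y * deriv (C n) y) y :=
      ((hf y).hasDerivAt).mul ((hC n y).hasDerivAt)
    rw [show (fun y => h y * D n y) = fun y => f y * C n y from funext top2] at H1
    exact H1.unique H2
  -- derivative of the target function, pointwise
  have main : ∀ x : ℝ,
      HasDerivAt (fun y => (C n y / h y) ^ 2 * (f y * h y - g y ^ 2)) 0 x := by
    intro x
    have hx0 : h x ≠ 0 := ne_of_gt (hhpos x)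
    have hq : HasDerivAt (fun y => C n y / h y)
        ((deriv (C n) x * h x - C n x * deriv h x) / h x ^ 2) x :=
      ((hC n x).hasDerivAt).div ((hh x).hasDerivAt) hx0
    have hq2 := hq.pow 2
    have hΔ : HasDerivAt (fun y => f y * h y - g y ^ 2)
        (deriv f x * h x + f x * deriv h x - (2 : ℕ) * g x ^ (2 - 1) * deriv g x) x :=
      (((hf x).hasDerivAt).mul ((hh x).hasDerivAt)).sub (((hg x).hasDerivAt).pow 2)
    have hΦ := hq2.mul hΔ
    refine hΦ.congr_deriv ?_
    simp only [Pi.pow_apply]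
    symm
    -- show 0 = the derivative expression
    have K : f x * deriv (C n) x + h x * deriv (D n) x = 2 * g x * deriv (A n) x := by
      have f4 := (E1 x).2
      have f5 := (E2 x).2
      have f6 := (E3 x).2
      linear_combination (-(f x)) * f4 + (h x) * f5 + (2 * g x) * f6
    have hT : 2 * C n x * deriv (C n) x * h x * (f x * h x - g x ^ 2)
        - 2 * (C n x) ^ 2 * deriv h x * (f x * h x - g x ^ 2)
        + (C n x) ^ 2 * h x * (deriv f x * h x + f x * deriv h x - 2 * g x * deriv g x)
        = 0 := by
      linear_combination (C n x * h x ^ 2) * K - (C n x * h x ^ 2) * e2' x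
        + (2 * C n x * g x * h x) * e1' x + (C n x * h x * deriv h x) * top2 x
        - (2 * C n x * g x * deriv h x) * top1 x
    norm_num
    field_simp
    linear_combination (-1 : ℝ) * hT
  exact fun x y =>
    is_const_of_deriv_eq_zero (fun t => (main t).differentiableAt)
      (fun t => (main t).deriv) x y
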